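/- arXiv:1106.3288 — 3 statements merged into one kernel-verified Lean document; each statement's English description precedes it below -/
import Mathlib

section
/- For every a > 1 and every ε > 0, the second derivative of h_ε(ξ) = exp(-ε|ξ|^a) satisfies |h_ε''(ξ)| ≤ C/|ξ|² for all ξ ≠ 0, with constant C depending only on a and not on ε. -/
open Real

private lemma texp_le_one {t : ℝ} (_ht : 0 ≤ t) : t * Real.exp (-t) ≤ 1 := by
  rw [Real.exp_neg]
  rw [mul_inv_le_iff₀ (Real.exp_pos t), one_mul]
  linarith [Real.add_one_le_exp t]

private lemma t2exp_le_four {t : ℝ} (ht : 0 ≤ t) : t ^ 2 * Real.exp (-t) ≤ 4 := by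
  rw [Real.exp_neg, mul_inv_le_iff₀ (Real.exp_pos t)]
  have h1 : t / 2 + 1 ≤ Real.exp (t / 2) := Real.add_one_le_exp _
  have h2 : Real.exp (t / 2) * Real.exp (t / 2) = Real.exp t := by
    rw [← Real.exp_add]; ring_nf
  nlinarith [Real.exp_pos (t / 2)]

private lemma deriv_pos_side (a ε ξ : ℝ) (hξ : 0 < ξ) :
    deriv (deriv (fun x : ℝ => Real.exp (-ε * |x| ^ a))) ξ =
      Real.exp (-ε * ξ ^ a) * (-ε * (a * ξ ^ (a - 1))) * (-ε * (a * ξ ^ (a - 1)))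
        + Real.exp (-ε * ξ ^ a) * (-ε * (a * ((a - 1) * ξ ^ (a - 1 - 1)))) := by
  set G : ℝ → ℝ := fun x => Real.exp (-ε * x ^ a) * (-ε * (a * x ^ (a - 1))) with hG
  have hD : ∀ x : ℝ, 0 < x →
      HasDerivAt (fun y : ℝ => Real.exp (-ε * y ^ a)) (G x) x := by
    intro x hx
    exact ((Real.hasDerivAt_rpow_const (Or.inl hx.ne')).const_mul (-ε)).exp
  have hmem : Set.Ioi (0:ℝ) ∈ nhds ξ := isOpen_Ioi.mem_nhds hξ
  have heq : (fun x : ℝ => Real.exp (-ε * |x| ^ a)) =ᶠ[nhds ξ]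
      (fun y : ℝ => Real.exp (-ε * y ^ a)) := by
    filter_upwards [hmem] with x hx
    rw [abs_of_pos hx]
  have h2 : deriv (fun y : ℝ => Real.exp (-ε * y ^ a)) =ᶠ[nhds ξ] G := by
    filter_upwards [hmem] with x hx
    exact (hD x hx).deriv
  have h3 : deriv (fun x : ℝ => Real.exp (-ε * |x| ^ a)) =ᶠ[nhds ξ] G :=
    heq.deriv.trans h2
  rw [h3.deriv_eq]
  have h4 : HasDerivAt (fun x : ℝ => -ε * (a * x ^ (a - 1)))
      (-ε * (a * ((a - 1) * ξ ^ (a - 1 - 1)))) ξ :=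
    ((Real.hasDerivAt_rpow_const (Or.inl hξ.ne')).const_mul a).const_mul (-ε)
  have h5 := (hD ξ hξ).mul h4
  exact h5.deriv

private lemma even_second_deriv (a ε ξ : ℝ) :
    deriv (deriv (fun x : ℝ => Real.exp (-ε * |x| ^ a))) (-ξ) =
      deriv (deriv (fun x : ℝ => Real.exp (-ε * |x| ^ a))) ξ := by
  set F : ℝ → ℝ := fun x => Real.exp (-ε * |x| ^ a) with hF
  have habs : ∀ x : ℝ, F (-x) = F x := by
    intro x; simp [hF, abs_neg]
  have hodd : ∀ x : ℝ, deriv F x = -deriv F (-x) := by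
    intro x
    have : deriv F x = deriv (fun y => F (-y)) x := by
      congr 1; funext y; rw [habs]
    rw [this, deriv_comp_neg]
  have : deriv (deriv F) ξ = deriv (fun y => -deriv F (-y)) ξ := by
    congr 1; funext y; rw [← hodd]
  rw [this, deriv.fun_neg, deriv_comp_neg, neg_neg]

theorem second_deriv_bound (a : ℝ) (ha : 1 < a) :
    ∃ C : ℝ, 0 < C ∧ ∀ ε : ℝ, 0 < ε → ∀ ξ : ℝ, ξ ≠ 0 →
      |deriv (deriv (fun ξ : ℝ => Real.exp (-ε * |ξ| ^ a))) ξ| ≤ C / |ξ| ^ 2 := by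
  have ha0 : 0 < a := lt_trans one_pos ha
  refine ⟨5 * a ^ 2, by positivity, ?_⟩
  intro ε hε ξ hξ
  -- reduce to the case ξ > 0
  have key : ∀ x : ℝ, 0 < x →
      |deriv (deriv (fun y : ℝ => Real.exp (-ε * |y| ^ a))) x| ≤ 5 * a ^ 2 / |x| ^ 2 := by
    intro x hx
    rw [deriv_pos_side a ε x hx, abs_of_pos hx]
    set t : ℝ := ε * x ^ a with htdef
    have hxa : (0:ℝ) < x ^ a := Real.rpow_pos_of_pos hx a
    have ht : 0 < t := mul_pos hε hxa
    have hE : Real.exp (-ε * x ^ a) = Real.exp (-t) := by rw [htdef]; ring_nf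
    have hP : x ^ (a - 1) = x ^ a / x := by
      rw [Real.rpow_sub hx, Real.rpow_one]
    have hQ : x ^ (a - 1 - 1) = x ^ a / x ^ 2 := by
      rw [show a - 1 - 1 = a - 2 by ring, Real.rpow_sub hx,
        show (2:ℝ) = ((2:ℕ):ℝ) by norm_num, Real.rpow_natCast]
    have hexpr : Real.exp (-ε * x ^ a) * (-ε * (a * x ^ (a - 1))) * (-ε * (a * x ^ (a - 1)))
        + Real.exp (-ε * x ^ a) * (-ε * (a * ((a - 1) * x ^ (a - 1 - 1))))
        = (a ^ 2 * (t ^ 2 * Real.exp (-t)) - a * (a - 1) * (t * Real.exp (-t))) / x ^ 2 := by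
      rw [hE, hP, hQ, htdef]
      field_simp
      ring
    rw [hexpr, abs_div, abs_of_pos (by positivity : (0:ℝ) < x ^ 2)]
    rw [div_le_div_iff_of_pos_right (by positivity)]
    have h1 : t * Real.exp (-t) ≤ 1 := texp_le_one ht.le
    have h2 : t ^ 2 * Real.exp (-t) ≤ 4 := t2exp_le_four ht.le
    have h1' : 0 ≤ t * Real.exp (-t) := by positivity
    have h2' : 0 ≤ t ^ 2 * Real.exp (-t) := by positivity
    rw [abs_le]
    constructor <;> nlinarith
  rcases hξ.lt_or_gt with h | h
  · have := key (-ξ) (by linarith)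
    rw [even_second_deriv a ε ξ] at this
    simpa [abs_neg] using this
  · exact key ξ h
end

section
/- Let a > 1 and γ > 1. If s < (a/4)(1 − 1/γ), then with f_v as in the Dahlberg–Kenig type construction, ‖f_v‖_{H^s(ℝ)} → 0 as v → 0. -/
open Real Set MeasureTheory Filter

set_option maxHeartbeats 1000000

theorem sobolev_norm_tendsto_zero (a γ s : ℝ) (ha : 1 < a) (hγ : 1 < γ) (hs : 0 ≤ s)
    (hcrit : s < a / 4 * (1 - 1 / γ)) (g : ℝ → ℝ → ℝ)
    (hg0 : ∀ v η, 0 ≤ g v η) (hg1 : ∀ v η, g v η ≤ 1)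
    (hsupp : ∀ v ∈ Ioo (0:ℝ) 1, ∀ η : ℝ, v ^ ((a - 1) - a / γ) < |η| → g v η = 0)
    (hone : ∀ v ∈ Ioo (0:ℝ) 1, ∀ η : ℝ, |η| ≤ v ^ ((a - 1) - a / γ) / 2 → g v η = 1) :
    Tendsto (fun v : ℝ => ∫ ξ : ℝ, (1 + ξ ^ 2) ^ s * (v * g v (v * ξ + 1 / v)) ^ 2)
      (nhdsWithin 0 (Ioi 0)) (nhds 0) := by
  have hγ0 : (0:ℝ) < γ := lt_trans one_pos hγ
  set ε : ℝ := a - 4 * s - a / γ with hε_def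
  have hεpos : 0 < ε := by
    have h4 : a / 4 * (1 - 1 / γ) = (a - a / γ) / 4 := by field_simp
    rw [h4] at hcrit
    have : 4 * s < a - a / γ := by linarith
    simp only [hε_def]; linarith
  set C : ℝ := 2 * (5:ℝ) ^ s with hC_def
  have hC0 : (0:ℝ) ≤ C := by positivity
  apply squeeze_zero' (g := fun v : ℝ => C * v ^ ε)
  · filter_upwards with v
    apply integral_nonneg
    intro ξ
    have h1 : (0:ℝ) < 1 + ξ ^ 2 := by positivity
    positivity
  · filter_upwards [Ioo_mem_nhdsGT (one_pos : (0:ℝ) < 1)] with v hv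
    obtain ⟨hv0, hv1⟩ := hv
    set r : ℝ := v ^ ((a - 1) - a / γ) with hr_def
    have hr0 : 0 < r := rpow_pos_of_pos hv0 _
    set A : ℝ := (-r - 1 / v) / v with hA_def
    set B : ℝ := (r - 1 / v) / v with hB_def
    set f : ℝ → ℝ := fun ξ => (1 + ξ ^ 2) ^ s * (v * g v (v * ξ + 1 / v)) ^ 2 with hf_def
    have hAB : A ≤ B := by
      apply div_le_div_of_nonneg_right ?_ hv0.le
      linarith
    -- f vanishes outside Icc A B
    have hvanish : ∀ ξ, ξ ∉ Icc A B → f ξ = 0 := by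
      intro ξ hξ
      have hg : g v (v * ξ + 1 / v) = 0 := by
        apply hsupp v ⟨hv0, hv1⟩
        rw [← hr_def]
        simp only [mem_Icc, not_and_or, not_le] at hξ
        rcases hξ with h | h
        · have h' : ξ * v < -r - 1 / v := by
            rw [hA_def] at h
            exact (lt_div_iff₀ hv0).1 h
          have h2 : v * ξ + 1 / v < -r := by
            rw [mul_comm]; linarith
          calc r < -(v * ξ + 1 / v) := by linarith
            _ ≤ |v * ξ + 1 / v| := neg_le_abs _
        · have h' : r - 1 / v < ξ * v := by
            rw [hB_def] at h
            exact (div_lt_iff₀ hv0).1 h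
          have h2 : r < v * ξ + 1 / v := by
            rw [mul_comm]; linarith
          exact h2.trans_le (le_abs_self _)
      show (1 + ξ ^ 2) ^ s * (v * g v (v * ξ + 1 / v)) ^ 2 = 0
      rw [hg]; ring
    have hint_eq : (∫ ξ : ℝ, f ξ) = ∫ ξ in Icc A B, f ξ :=
      (setIntegral_eq_integral_of_forall_compl_eq_zero hvanish).symm
    -- bound on the set
    set M : ℝ := (r + 1 / v) / v with hM_def
    have hM0 : 0 < M := by
      apply div_pos ?_ hv0
      have : 0 < 1 / v := by positivity
      linarith
    set K : ℝ := (1 + M ^ 2) ^ s * v ^ 2 with hK_def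
    have hbound : ∀ ξ ∈ Icc A B, ‖f ξ‖ ≤ K := by
      intro ξ hξ
      have hξabs : |ξ| ≤ M := by
        rw [abs_le]
        constructor
        · have : -M = A := by rw [hM_def, hA_def]; ring
          linarith [hξ.1]
        · have hBM : B ≤ M := by
            apply div_le_div_of_nonneg_right ?_ hv0.le
            have : 0 < 1 / v := by positivity
            linarith
          linarith [hξ.2]
      have h1 : (1:ℝ) + ξ ^ 2 ≤ 1 + M ^ 2 := by
        have := sq_abs ξ
        nlinarith [abs_nonneg ξ]
      have h2 : (1 + ξ ^ 2) ^ s ≤ (1 + M ^ 2) ^ s :=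
        rpow_le_rpow (by positivity) h1 hs
      have h3 : (v * g v (v * ξ + 1 / v)) ^ 2 ≤ v ^ 2 := by
        have hg01 := hg0 v (v * ξ + 1 / v)
        have hg11 := hg1 v (v * ξ + 1 / v)
        nlinarith [sq_nonneg v, mul_nonneg (sub_nonneg.2 hg11) (by linarith : (0:ℝ) ≤ 1 + g v (v * ξ + 1 / v)), sq_nonneg (v * g v (v * ξ + 1 / v))]
      have hfnn : 0 ≤ f ξ := by
        have : (0:ℝ) < 1 + ξ ^ 2 := by positivity
        positivity
      rw [Real.norm_eq_abs, abs_of_nonneg hfnn]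
      calc f ξ ≤ (1 + M ^ 2) ^ s * (v * g v (v * ξ + 1 / v)) ^ 2 := by
            apply mul_le_mul_of_nonneg_right h2 (by positivity)
        _ ≤ (1 + M ^ 2) ^ s * v ^ 2 := by
            apply mul_le_mul_of_nonneg_left h3 (by positivity)
    have hvol : (volume (Icc A B)).toReal = 2 * r / v := by
      rw [Real.volume_Icc, ENNReal.toReal_ofReal (by linarith)]
      rw [hB_def, hA_def]; field_simp; ring
    have hmain : (∫ ξ : ℝ, f ξ) ≤ K * (2 * r / v) := by
      rw [hint_eq]
      calc (∫ ξ in Icc A B, f ξ) ≤ ‖∫ ξ in Icc A B, f ξ‖ := le_norm_self _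
        _ ≤ K * (volume (Icc A B)).toReal :=
          norm_setIntegral_le_of_norm_le_const measure_Icc_lt_top hbound
        _ = K * (2 * r / v) := by rw [hvol]
    -- arithmetic: K * (2 r / v) ≤ C * v ^ ε
    have hmul : ∀ x y : ℝ, v ^ (x:ℝ) * v ^ (y:ℝ) = v ^ (x + y) := fun x y =>
      (Real.rpow_add hv0 x y).symm
    have hw1 : (1:ℝ) ≤ v ^ (-2:ℝ) := by
      have h := (Real.rpow_le_rpow_left_iff_of_base_lt_one hv0 hv1).2
        (by norm_num : (-2:ℝ) ≤ 0)
      rwa [Real.rpow_zero] at h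
    have hM2 : M ≤ 2 * v ^ (-2:ℝ) := by
      have hrv : r ≤ v ^ (-1:ℝ) := by
        rw [hr_def]
        apply (Real.rpow_le_rpow_left_iff_of_base_lt_one hv0 hv1).2
        have h1 : 0 < a - a / γ := by
          have : a / γ < a := by
            rw [div_lt_iff₀ hγ0]; nlinarith
          linarith
        linarith
      have : M = r / v + 1 / v ^ 2 := by rw [hM_def]; field_simp
      rw [this]
      have e1 : r / v ≤ v ^ (-2:ℝ) := by
        rw [div_le_iff₀ hv0]
        calc r ≤ v ^ (-1:ℝ) := hrv
          _ = v ^ (-2:ℝ) * v := by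
            rw [show ((-1:ℝ)) = -2 + 1 by norm_num, Real.rpow_add hv0, Real.rpow_one]
      have e2 : 1 / v ^ 2 = v ^ (-2:ℝ) := by
        rw [Real.rpow_neg hv0.le, ← Real.rpow_natCast v 2]
        norm_num
      rw [e2]; linarith
    have hKle : K ≤ 5 ^ s * v ^ (-(4*s)) * v ^ (2:ℝ) := by
      have h5 : 1 + M ^ 2 ≤ 5 * (v ^ (-2:ℝ)) ^ 2 := by nlinarith
      have h6 : (1 + M ^ 2) ^ s ≤ (5 * (v ^ (-2:ℝ)) ^ 2) ^ s :=
        rpow_le_rpow (by positivity) h5 hs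
      have h7 : (5 * (v ^ (-2:ℝ)) ^ 2 : ℝ) ^ s = 5 ^ s * v ^ (-(4*s)) := by
        rw [Real.mul_rpow (by norm_num) (by positivity)]
        congr 1
        rw [← Real.rpow_natCast (v ^ (-2:ℝ)) 2, ← Real.rpow_mul hv0.le,
          ← Real.rpow_mul hv0.le]
        norm_num
      have h8 : (v:ℝ) ^ (2:ℕ) = v ^ (2:ℝ) := by
        rw [← Real.rpow_natCast v 2]; norm_num
      rw [hK_def, h8]
      apply mul_le_mul_of_nonneg_right _ (by positivity)
      rw [← h7]; exact h6
    have hfinal : K * (2 * r / v) ≤ C * v ^ ε := by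
      have hrv2 : 2 * r / v = 2 * (v ^ ((a-1) - a/γ) * v ^ (-1:ℝ)) := by
        rw [hr_def, Real.rpow_neg hv0.le, Real.rpow_one]
        field_simp
      calc K * (2 * r / v) ≤ (5 ^ s * v ^ (-(4*s)) * v ^ (2:ℝ)) * (2 * r / v) := by
            apply mul_le_mul_of_nonneg_right hKle
            positivity
        _ = C * (v ^ (-(4*s)) * (v ^ (2:ℝ) * (v ^ ((a-1) - a/γ) * v ^ (-1:ℝ)))) := by
            rw [hrv2, hC_def]; ring
        _ = C * v ^ ε := by
            rw [hmul, hmul, hmul]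
            congr 1
            rw [hε_def]
            congr 1
            ring
    exact le_trans hmain hfinal
  · have h1 : Tendsto (fun v : ℝ => v ^ ε) (nhdsWithin 0 (Ioi 0)) (nhds 0) := by
      have := (Real.continuousAt_rpow_const 0 ε (Or.inr hεpos.le)).tendsto
      rw [Real.zero_rpow hεpos.ne'] at this
      exact this.mono_left nhdsWithin_le_nhds
    have := h1.const_mul C
    simpa using this
end

section
/- Let a > 1 and K(x) = (1/π)∫_0^∞ e^{−ξ^a} cos(xξ) dξ. Then there is a constant C (depending on a) such that |K(x)| ≤ C·|x|^{−2} for all x ≠ 0. -/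
open Real Set MeasureTheory Filter Topology

lemma trig_int (a s x : ℝ) (ha : 1 ≤ a) (hs : -1 < s) (φ : ℝ → ℝ) (hφc : Continuous φ)
    (hφ : ∀ t, |φ t| ≤ 1) :
    IntegrableOn (fun ξ => ξ ^ s * Real.exp (-ξ ^ a) * φ (x * ξ)) (Ioi (0:ℝ)) := by
  have h0 := integrableOn_rpow_mul_exp_neg_rpow (p := a) hs (by linarith)
  have hc : ContinuousOn (fun ξ : ℝ => ξ ^ s * Real.exp (-ξ ^ a) * φ (x * ξ)) (Ioi 0) := by
    intro ξ hξ
    have h1 : ContinuousAt (fun t : ℝ => t ^ s) ξ :=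
      Real.continuousAt_rpow_const ξ s (Or.inl (ne_of_gt hξ))
    have h2 : ContinuousAt (fun t : ℝ => Real.exp (-t ^ a)) ξ :=
      ((Real.continuousAt_rpow_const ξ a (Or.inl (ne_of_gt hξ))).neg).rexp
    have h3 : ContinuousAt (fun t : ℝ => φ (x * t)) ξ :=
      (hφc.continuousAt).comp (continuousAt_const.mul continuousAt_id)
    exact ((h1.mul h2).mul h3).continuousWithinAt
  refine h0.mono' (hc.aestronglyMeasurable measurableSet_Ioi) ?_
  filter_upwards [ae_restrict_mem measurableSet_Ioi] with ξ hξ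
  have hξ0 : (0:ℝ) < ξ := hξ
  have hpos : 0 ≤ ξ ^ s * Real.exp (-ξ ^ a) := by positivity
  rw [Real.norm_eq_abs, abs_mul, abs_of_nonneg hpos]
  calc ξ ^ s * Real.exp (-ξ ^ a) * |φ (x * ξ)| ≤ ξ ^ s * Real.exp (-ξ ^ a) * 1 :=
        mul_le_mul_of_nonneg_left (hφ _) hpos
    _ = ξ ^ s * Real.exp (-ξ ^ a) := by ring

lemma abs_sin_le (t : ℝ) : |Real.sin t| ≤ 1 := abs_le.mpr ⟨Real.neg_one_le_sin t, Real.sin_le_one t⟩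
lemma abs_cos_le (t : ℝ) : |Real.cos t| ≤ 1 := abs_le.mpr ⟨Real.neg_one_le_cos t, Real.cos_le_one t⟩

lemma exp_tendsto (a : ℝ) (ha0 : 0 < a) :
    Tendsto (fun ξ : ℝ => Real.exp (-ξ ^ a)) atTop (𝓝 0) :=
  Real.tendsto_exp_atBot.comp (tendsto_neg_atTop_atBot.comp (tendsto_rpow_atTop ha0))

lemma sin_int (a x : ℝ) (ha : 1 < a) :
    IntegrableOn (fun ξ => a * ξ ^ (a-1) * Real.exp (-ξ ^ a) * Real.sin (x * ξ)) (Ioi (0:ℝ)) := by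
  have := (trig_int a (a-1) x ha.le (by linarith) Real.sin Real.continuous_sin abs_sin_le).const_mul a
  exact this.congr (ae_of_all _ fun ξ => by ring)

lemma cos_int (a x : ℝ) (ha : 1 < a) :
    IntegrableOn (fun ξ => Real.exp (-ξ ^ a) * Real.cos (x * ξ)) (Ioi (0:ℝ)) := by
  have := trig_int a 0 x ha.le (by norm_num) Real.cos Real.continuous_cos abs_cos_le
  exact this.congr (ae_of_all _ fun ξ => by simp [Real.rpow_zero])

lemma step1 (a x : ℝ) (ha : 1 < a) :
    x * ∫ ξ in Ioi (0:ℝ), Real.exp (-ξ ^ a) * Real.cos (x * ξ)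
      = ∫ ξ in Ioi (0:ℝ), a * ξ ^ (a-1) * Real.exp (-ξ ^ a) * Real.sin (x * ξ) := by
  have ha0 : (0:ℝ) < a := by linarith
  set F : ℝ → ℝ := fun t => Real.exp (-t ^ a) * Real.sin (x * t) with hF
  set F' : ℝ → ℝ := fun t => Real.exp (-t ^ a) * (-(a * t ^ (a-1))) * Real.sin (x * t)
      + Real.exp (-t ^ a) * (Real.cos (x * t) * x) with hF'
  have hderiv : ∀ ξ ∈ Ioi (0:ℝ), HasDerivAt F (F' ξ) ξ := by
    intro ξ hξ
    have hexp : HasDerivAt (fun t : ℝ => Real.exp (-t ^ a))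
        (Real.exp (-ξ ^ a) * (-(a * ξ ^ (a-1)))) ξ :=
      ((Real.hasDerivAt_rpow_const (Or.inl (ne_of_gt hξ))).neg).exp
    have hsin : HasDerivAt (fun t : ℝ => Real.sin (x * t)) (Real.cos (x * ξ) * x) ξ := by
      simpa using ((hasDerivAt_id ξ).const_mul x).sin
    exact hexp.mul hsin
  have hint : IntegrableOn F' (Ioi (0:ℝ)) := by
    refine (((sin_int a x ha).neg).add ((cos_int a x ha).const_mul x)).congr
      (ae_of_all _ fun ξ => by simp only [Pi.add_apply, Pi.neg_apply]; ring)
  have htop : Tendsto F atTop (𝓝 0) := by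
    refine squeeze_zero_norm (fun ξ => ?_) (exp_tendsto a ha0)
    rw [Real.norm_eq_abs, hF, abs_mul, abs_of_pos (Real.exp_pos _)]
    calc Real.exp (-ξ ^ a) * |Real.sin (x * ξ)| ≤ Real.exp (-ξ ^ a) * 1 :=
          mul_le_mul_of_nonneg_left (abs_sin_le _) (Real.exp_pos _).le
      _ = Real.exp (-ξ ^ a) := mul_one _
  have hcont : ContinuousWithinAt F (Ici 0) 0 := by
    apply ContinuousAt.continuousWithinAt
    exact (((Real.continuousAt_rpow_const 0 a (Or.inr ha0.le)).neg).rexp).mul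
      ((Real.continuous_sin.continuousAt).comp (continuousAt_const.mul continuousAt_id))
  have key : ∫ ξ in Ioi (0:ℝ), F' ξ = 0 - F 0 :=
    integral_Ioi_of_hasDerivAt_of_tendsto hcont hderiv hint htop
  have hF0 : F 0 = 0 := by simp [hF]
  rw [hF0, sub_zero] at key
  have hsplit : ∫ ξ in Ioi (0:ℝ), F' ξ
      = (∫ ξ in Ioi (0:ℝ), Real.exp (-ξ ^ a) * (-(a * ξ ^ (a-1))) * Real.sin (x * ξ))
        + ∫ ξ in Ioi (0:ℝ), Real.exp (-ξ ^ a) * (Real.cos (x * ξ) * x) := by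
    apply integral_add
    · exact ((sin_int a x ha).neg).congr (ae_of_all _ fun ξ => by simp only [Pi.neg_apply]; ring)
    · exact ((cos_int a x ha).const_mul x).congr (ae_of_all _ fun ξ => by ring)
  have e1 : (∫ ξ in Ioi (0:ℝ), Real.exp (-ξ ^ a) * (-(a * ξ ^ (a-1))) * Real.sin (x * ξ))
      = - ∫ ξ in Ioi (0:ℝ), a * ξ ^ (a-1) * Real.exp (-ξ ^ a) * Real.sin (x * ξ) := by
    rw [← integral_neg]
    exact integral_congr_ae (ae_of_all _ fun ξ => by ring)
  have e2 : (∫ ξ in Ioi (0:ℝ), Real.exp (-ξ ^ a) * (Real.cos (x * ξ) * x))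
      = x * ∫ ξ in Ioi (0:ℝ), Real.exp (-ξ ^ a) * Real.cos (x * ξ) := by
    rw [← integral_const_mul]
    exact integral_congr_ae (ae_of_all _ fun ξ => by ring)
  rw [hsplit, e1, e2] at key
  linarith

lemma step2 (a x : ℝ) (ha : 1 < a) :
    x * ∫ ξ in Ioi (0:ℝ), a * ξ ^ (a-1) * Real.exp (-ξ ^ a) * Real.sin (x * ξ)
      = ∫ ξ in Ioi (0:ℝ), (a * ((a-1) * ξ ^ (a-2)) * Real.exp (-ξ ^ a)
          + a * ξ ^ (a-1) * (Real.exp (-ξ ^ a) * (-(a * ξ ^ (a-1))))) * Real.cos (x * ξ) := by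
  have ha0 : (0:ℝ) < a := by linarith
  set H : ℝ → ℝ := fun t => a * t ^ (a-1) * Real.exp (-t ^ a) * Real.cos (x * t) with hH
  set H' : ℝ → ℝ := fun t => (a * ((a-1) * t ^ (a-2)) * Real.exp (-t ^ a)
      + a * t ^ (a-1) * (Real.exp (-t ^ a) * (-(a * t ^ (a-1))))) * Real.cos (x * t)
      + a * t ^ (a-1) * Real.exp (-t ^ a) * (-Real.sin (x * t) * x) with hH'
  have i1 : IntegrableOn (fun ξ : ℝ => (a * ((a-1) * ξ ^ (a-2)) * Real.exp (-ξ ^ a)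
      + a * ξ ^ (a-1) * (Real.exp (-ξ ^ a) * (-(a * ξ ^ (a-1))))) * Real.cos (x * ξ))
      (Ioi (0:ℝ)) := by
    have q1 := (trig_int a (a-2) x ha.le (by linarith) Real.cos Real.continuous_cos
      abs_cos_le).const_mul (a*(a-1))
    have q2 := (trig_int a (2*a-2) x ha.le (by linarith) Real.cos Real.continuous_cos
      abs_cos_le).const_mul (a*a)
    refine (q1.sub q2).congr ?_
    filter_upwards [ae_restrict_mem measurableSet_Ioi] with ξ hξ
    simp only [Pi.sub_apply]
    rw [show (2*a-2 : ℝ) = (a-1)+(a-1) by ring, Real.rpow_add hξ]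
    ring
  have i2 : IntegrableOn (fun ξ : ℝ => a * ξ ^ (a-1) * Real.exp (-ξ ^ a) *
      (-Real.sin (x * ξ) * x)) (Ioi (0:ℝ)) :=
    ((sin_int a x ha).const_mul (-x)).congr (ae_of_all _ fun ξ => by ring)
  have hderiv : ∀ ξ ∈ Ioi (0:ℝ), HasDerivAt H (H' ξ) ξ := by
    intro ξ hξ
    have hexp : HasDerivAt (fun t : ℝ => Real.exp (-t ^ a))
        (Real.exp (-ξ ^ a) * (-(a * ξ ^ (a-1)))) ξ :=
      ((Real.hasDerivAt_rpow_const (Or.inl (ne_of_gt hξ))).neg).exp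
    have hr : HasDerivAt (fun t : ℝ => t ^ (a-1)) ((a-1) * ξ ^ (a-2)) ξ := by
      have := Real.hasDerivAt_rpow_const (p := a-1) (Or.inl (ne_of_gt hξ))
      rwa [show a-1-1 = a-2 by ring] at this
    have hu := (hr.const_mul a).mul hexp
    have hcos : HasDerivAt (fun t : ℝ => Real.cos (x * t)) (-Real.sin (x * ξ) * x) ξ := by
      simpa using ((hasDerivAt_id ξ).const_mul x).cos
    exact hu.mul hcos
  have htop : Tendsto H atTop (𝓝 0) := by
    have h1 := (tendsto_rpow_mul_exp_neg_mul_atTop_nhds_zero ((a-1)/a) 1 one_pos).comp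
      (tendsto_rpow_atTop ha0)
    have h2 : Tendsto (fun ξ : ℝ => ξ ^ (a-1) * Real.exp (-ξ ^ a)) atTop (𝓝 0) := by
      apply h1.congr'
      filter_upwards [eventually_gt_atTop (0:ℝ)] with ξ hξ
      simp only [Function.comp_apply, neg_one_mul]
      rw [← Real.rpow_mul hξ.le, show a * ((a-1)/a) = a-1 by field_simp]
    refine squeeze_zero_norm' ?_ (by simpa using h2.const_mul a)
    filter_upwards [eventually_gt_atTop (0:ℝ)] with ξ hξ
    have hnn : (0:ℝ) ≤ a * ξ ^ (a-1) * Real.exp (-ξ ^ a) := by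
      have := Real.rpow_nonneg hξ.le (a-1)
      positivity
    rw [Real.norm_eq_abs, hH, abs_mul, abs_of_nonneg hnn]
    calc a * ξ ^ (a-1) * Real.exp (-ξ ^ a) * |Real.cos (x * ξ)|
        ≤ a * ξ ^ (a-1) * Real.exp (-ξ ^ a) * 1 :=
          mul_le_mul_of_nonneg_left (abs_cos_le _) hnn
      _ = a * (ξ ^ (a-1) * Real.exp (-ξ ^ a)) := by ring
  have hcont : ContinuousWithinAt H (Ici 0) 0 := by
    apply ContinuousAt.continuousWithinAt
    exact ((continuousAt_const.mul (Real.continuousAt_rpow_const 0 (a-1)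
        (Or.inr (by linarith)))).mul
        (((Real.continuousAt_rpow_const 0 a (Or.inr ha0.le)).neg).rexp)).mul
      ((Real.continuous_cos.continuousAt).comp (continuousAt_const.mul continuousAt_id))
  have hint : IntegrableOn H' (Ioi (0:ℝ)) := by
    refine (i1.add i2).congr (ae_of_all _ fun ξ => ?_)
    simp only [Pi.add_apply, hH']
  have key : ∫ ξ in Ioi (0:ℝ), H' ξ = 0 - H 0 :=
    integral_Ioi_of_hasDerivAt_of_tendsto hcont hderiv hint htop
  have hH0 : H 0 = 0 := by
    simp [hH, Real.zero_rpow (show a - 1 ≠ 0 by intro h; linarith [sub_eq_zero.mp h])]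
  rw [hH0, sub_zero] at key
  have hsplit : ∫ ξ in Ioi (0:ℝ), H' ξ
      = (∫ ξ in Ioi (0:ℝ), (a * ((a-1) * ξ ^ (a-2)) * Real.exp (-ξ ^ a)
          + a * ξ ^ (a-1) * (Real.exp (-ξ ^ a) * (-(a * ξ ^ (a-1))))) * Real.cos (x * ξ))
        + ∫ ξ in Ioi (0:ℝ), a * ξ ^ (a-1) * Real.exp (-ξ ^ a) * (-Real.sin (x * ξ) * x) :=
    integral_add i1 i2
  have e2 : (∫ ξ in Ioi (0:ℝ), a * ξ ^ (a-1) * Real.exp (-ξ ^ a) * (-Real.sin (x * ξ) * x))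
      = -x * ∫ ξ in Ioi (0:ℝ), a * ξ ^ (a-1) * Real.exp (-ξ ^ a) * Real.sin (x * ξ) := by
    rw [← integral_const_mul]
    exact integral_congr_ae (ae_of_all _ fun ξ => by ring)
  rw [hsplit, e2] at key
  linarith

theorem kernel_decay (a : ℝ) (ha : 1 < a) :
    ∃ C : ℝ, 0 < C ∧ ∀ x : ℝ, x ≠ 0 →
      |(1 / Real.pi) * ∫ ξ in Ioi (0:ℝ), Real.exp (-ξ ^ a) * Real.cos (x * ξ)| ≤
        C / x ^ 2 := by
  have ha0 : (0:ℝ) < a := by linarith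
  set B : ℝ → ℝ := fun ξ => a * ((a-1) * ξ ^ (a-2)) * Real.exp (-ξ ^ a)
      + a * a * (ξ ^ (2*a-2) * Real.exp (-ξ ^ a)) with hBdef
  have hBint : IntegrableOn B (Ioi (0:ℝ)) := by
    have b1 := (trig_int a (a-2) 0 ha.le (by linarith) (fun _ => (1:ℝ)) continuous_const
      (fun t => by norm_num)).const_mul (a*(a-1))
    have b2 := (trig_int a (2*a-2) 0 ha.le (by linarith) (fun _ => (1:ℝ)) continuous_const
      (fun t => by norm_num)).const_mul (a*a)
    exact (b1.add b2).congr (ae_of_all _ fun ξ => by simp only [Pi.add_apply]; ring)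
  set C₀ : ℝ := ∫ ξ in Ioi (0:ℝ), B ξ with hC₀
  have hC₀nn : 0 ≤ C₀ := by
    refine setIntegral_nonneg measurableSet_Ioi fun ξ hξ => ?_
    have h1 : (0:ℝ) ≤ ξ ^ (a-2) := Real.rpow_nonneg (le_of_lt hξ) _
    have h2 : (0:ℝ) ≤ ξ ^ (2*a-2) := Real.rpow_nonneg (le_of_lt hξ) _
    have h3 := (Real.exp_pos (-ξ ^ a)).le
    have ha1 : (0:ℝ) ≤ a - 1 := by linarith
    simp only [hBdef]
    positivity
  refine ⟨C₀ + 1, by linarith, fun x hx => ?_⟩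
  have hx2 : (0:ℝ) < x ^ 2 := by positivity
  set I : ℝ := ∫ ξ in Ioi (0:ℝ), Real.exp (-ξ ^ a) * Real.cos (x * ξ) with hI
  have key : x ^ 2 * I
      = ∫ ξ in Ioi (0:ℝ), (a * ((a-1) * ξ ^ (a-2)) * Real.exp (-ξ ^ a)
          + a * ξ ^ (a-1) * (Real.exp (-ξ ^ a) * (-(a * ξ ^ (a-1))))) * Real.cos (x * ξ) := by
    have s1 := step1 a x ha
    have s2 := step2 a x ha
    calc x ^ 2 * I = x * (x * I) := by ring
      _ = x * ∫ ξ in Ioi (0:ℝ), a * ξ ^ (a-1) * Real.exp (-ξ ^ a) * Real.sin (x * ξ) := by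
          rw [← s1]
      _ = _ := s2
  have hbound : |x ^ 2 * I| ≤ C₀ := by
    rw [key, hC₀, ← Real.norm_eq_abs]
    refine norm_integral_le_of_norm_le hBint ?_
    filter_upwards [ae_restrict_mem measurableSet_Ioi] with ξ hξ
    have hξ0 : (0:ℝ) < ξ := hξ
    have hsq : ξ ^ (2*a-2) = ξ ^ (a-1) * ξ ^ (a-1) := by
      rw [show (2*a-2 : ℝ) = (a-1)+(a-1) by ring, Real.rpow_add hξ0]
    have hA1 : (0:ℝ) ≤ a * ((a-1) * ξ ^ (a-2)) * Real.exp (-ξ ^ a) := by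
      have h1 : (0:ℝ) ≤ ξ ^ (a-2) := Real.rpow_nonneg hξ0.le _
      have ha1 : (0:ℝ) ≤ a - 1 := by linarith
      positivity
    have hA2 : a * ξ ^ (a-1) * (Real.exp (-ξ ^ a) * (-(a * ξ ^ (a-1))))
        = -(a * a * (ξ ^ (2*a-2) * Real.exp (-ξ ^ a))) := by rw [hsq]; ring
    have hA2nn : (0:ℝ) ≤ a * a * (ξ ^ (2*a-2) * Real.exp (-ξ ^ a)) := by
      have h2 : (0:ℝ) ≤ ξ ^ (2*a-2) := Real.rpow_nonneg hξ0.le _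
      positivity
    rw [Real.norm_eq_abs, abs_mul]
    calc |a * ((a-1) * ξ ^ (a-2)) * Real.exp (-ξ ^ a)
          + a * ξ ^ (a-1) * (Real.exp (-ξ ^ a) * (-(a * ξ ^ (a-1))))| * |Real.cos (x * ξ)|
        ≤ (|a * ((a-1) * ξ ^ (a-2)) * Real.exp (-ξ ^ a)|
            + |a * ξ ^ (a-1) * (Real.exp (-ξ ^ a) * (-(a * ξ ^ (a-1))))|) * 1 := by
          refine mul_le_mul (abs_add_le _ _) (abs_cos_le _) (abs_nonneg _) ?_
          positivity
      _ = |a * ((a-1) * ξ ^ (a-2)) * Real.exp (-ξ ^ a)|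
            + |a * ξ ^ (a-1) * (Real.exp (-ξ ^ a) * (-(a * ξ ^ (a-1))))| := mul_one _
      _ = B ξ := by
          rw [abs_of_nonneg hA1, hA2, abs_neg, abs_of_nonneg hA2nn, hBdef]
  rw [abs_mul, abs_of_pos hx2] at hbound
  rw [abs_mul]
  have hπ : (1:ℝ) / π ≤ 1 := by
    rw [div_le_one Real.pi_pos]
    linarith [Real.pi_gt_three]
  have habs1 : |1 / Real.pi| = 1 / Real.pi := abs_of_pos (by positivity)
  rw [habs1]
  rw [le_div_iff₀ hx2]
  have hInn : (0:ℝ) ≤ |I| := abs_nonneg _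
  nlinarith [mul_le_mul_of_nonneg_right hπ (mul_nonneg hx2.le hInn), hbound,
    (by positivity : (0:ℝ) ≤ 1 / π)]
end
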